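/- arXiv:1405.7302 — 2 statements merged into one kernel-verified Lean document; each statement's English description precedes it below -/
import Mathlib

section
/- Let X_1, …, X_n be real numbers, let m be an integer with 1 ≤ m < n, and let D be a real number such that Σ_{k=1}^m X_k = (m/n)·Σ_{k=1}^n X_k + D. Then Σ_{k=1}^n X_k² ≥ (1/n)·(Σ_{k=1}^n X_k)² + D²·n/(m·(n−m)). -/
/-- The "defect form" of the Cauchy–Schwarz inequality: if the sum of the
first `m` of `n` real numbers deviates from its proportional share by `D`,
then `∑ Xₖ² ≥ (1/n)(∑ Xₖ)² + D²n/(m(n−m))`. -/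
theorem defect_cauchy_schwarz (n m : ℕ) (hm : 1 ≤ m) (hmn : m < n)
    (X : ℕ → ℝ) (D : ℝ)
    (hD : ∑ k ∈ Finset.Icc 1 m, X k
        = ((m : ℝ) / (n : ℝ)) * ∑ k ∈ Finset.Icc 1 n, X k + D) :
    ∑ k ∈ Finset.Icc 1 n, (X k) ^ 2
      ≥ (1 / (n : ℝ)) * (∑ k ∈ Finset.Icc 1 n, X k) ^ 2
        + D ^ 2 * (n : ℝ) / ((m : ℝ) * ((n : ℝ) - (m : ℝ))) := by
  have hm0 : (0:ℝ) < m := by exact_mod_cast hm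
  have hnm : (0:ℝ) < (n:ℝ) - m := by
    have : (m:ℝ) < n := by exact_mod_cast hmn
    linarith
  have hn0 : (0:ℝ) < n := by linarith
  -- split the sums
  have hsplit : ∀ f : ℕ → ℝ, ∑ k ∈ Finset.Icc 1 n, f k
      = ∑ k ∈ Finset.Icc 1 m, f k + ∑ k ∈ Finset.Icc (m+1) n, f k := by
    intro f
    have e : ∀ a k : ℕ, Finset.Icc (a+1) k = Finset.Ioc a k := by
      intro a k; ext x; simp only [Finset.mem_Icc, Finset.mem_Ioc]; omega
    rw [show (1:ℕ) = 0+1 from rfl, e, e, e,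
      ← Finset.sum_Ioc_consecutive f (Nat.zero_le m) (le_of_lt hmn)]
  set A := ∑ k ∈ Finset.Icc 1 m, X k with hA
  set B := ∑ k ∈ Finset.Icc (m+1) n, X k with hB
  have h1 : A ^ 2 ≤ m * ∑ k ∈ Finset.Icc 1 m, X k ^ 2 := by
    have := sq_sum_le_card_mul_sum_sq (s := Finset.Icc 1 m) (f := X)
    simpa [Nat.card_Icc] using this
  have h2 : B ^ 2 ≤ ((n:ℝ) - m) * ∑ k ∈ Finset.Icc (m+1) n, X k ^ 2 := by
    have := sq_sum_le_card_mul_sum_sq (s := Finset.Icc (m+1) n) (f := X)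
    have hc : ((Finset.Icc (m+1) n).card : ℝ) = (n:ℝ) - m := by
      rw [Nat.card_Icc]
      push_cast [Nat.sub_sub, Nat.cast_sub (le_of_lt hmn)]
      ring
    calc B ^ 2 ≤ ((Finset.Icc (m+1) n).card : ℝ) * ∑ k ∈ Finset.Icc (m+1) n, X k ^ 2 := this
    _ = _ := by rw [hc]
  have hS : ∑ k ∈ Finset.Icc 1 n, X k = A + B := hsplit X
  have hSq : ∑ k ∈ Finset.Icc 1 n, X k ^ 2
      = ∑ k ∈ Finset.Icc 1 m, X k ^ 2 + ∑ k ∈ Finset.Icc (m+1) n, X k ^ 2 :=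
    hsplit (fun k => X k ^ 2)
  rw [hSq, hS]
  rw [hS] at hD
  have hDval : D = A - (m/n)*(A+B) := by linarith [hD]
  have key : A^2/m + B^2/((n:ℝ)-m) = (A+B)^2/n + D^2*(n:ℝ)/(m*((n:ℝ)-m)) := by
    rw [hDval]; field_simp; ring
  have l1 : A^2/m ≤ ∑ k ∈ Finset.Icc 1 m, X k ^ 2 := by
    rw [div_le_iff₀ hm0]; linarith [h1]
  have l2 : B^2/((n:ℝ)-m) ≤ ∑ k ∈ Finset.Icc (m+1) n, X k ^ 2 := by
    rw [div_le_iff₀ hnm]; linarith [h2]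
  have : (1/(n:ℝ)) * (A+B)^2 = (A+B)^2/n := by ring
  rw [this]
  linarith [key, l1, l2]
end

section
/- Let U be a bipartite graph with parts X and Y, where |Y| = N ≥ 1, and let ε be a real number with 0 < ε ≤ 1/4. Suppose that all but at most εN vertices v ∈ Y satisfy deg_U(v) ≥ (1−ε)·e(U)/N, where e(U) is the number of edges of U. Then for every A ⊆ Y with |A| ≥ 4εN we have Σ_{x∈X} |N_U(x) ∩ A| ≥ (|A|/(2N))·e(U). -/
/-- Let `U` be a bipartite graph with parts `X` and `Y` (modelled by the
adjacency relation `E`), `|Y| = N ≥ 1`, and `0 < ε ≤ 1/4`.  If all but at most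
`εN` vertices `v ∈ Y` satisfy `deg_U(v) ≥ (1−ε)·e(U)/N`, then for every
`A ⊆ Y` with `|A| ≥ 4εN` the number of edges of `U` into `A`, namely
`∑_{x∈X} |N_U(x) ∩ A|`, is at least `(|A|/(2N))·e(U)`. -/
theorem edges_into_large_subset {α β : Type*}
    (X : Finset α) (Y : Finset β) (E : α → β → Prop)
    [∀ a b, Decidable (E a b)]
    (N : ℕ) (hN : 1 ≤ N) (hYcard : Y.card = N)
    (ε : ℝ) (hε0 : 0 < ε) (hε : ε ≤ 1 / 4)
    (hdeg : (((Y.filter fun v =>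
        ((X.filter fun x => E x v).card : ℝ) <
          (1 - ε) * (((X ×ˢ Y).filter fun p => E p.1 p.2).card : ℝ) / (N : ℝ)).card : ℝ))
        ≤ ε * (N : ℝ))
    (A : Finset β) (hAY : A ⊆ Y) (hAcard : 4 * ε * (N : ℝ) ≤ (A.card : ℝ)) :
    ((A.card : ℝ) / (2 * (N : ℝ)))
        * (((X ×ˢ Y).filter fun p => E p.1 p.2).card : ℝ)
      ≤ ∑ x ∈ X, (((A.filter fun y => E x y).card : ℝ)) := by
  classical
  set e : ℝ := (((X ×ˢ Y).filter fun p => E p.1 p.2).card : ℝ) with he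
  have hN0 : (0:ℝ) < N := by exact_mod_cast hN
  have he0 : 0 ≤ e := by positivity
  -- double counting
  have key : ∑ x ∈ X, (((A.filter fun y => E x y).card : ℝ))
      = ∑ v ∈ A, (((X.filter fun x => E x v).card : ℝ)) := by
    simp only [Finset.card_filter]
    push_cast
    rw [Finset.sum_comm]
  rw [key]
  set B := Y.filter fun v =>
      ((X.filter fun x => E x v).card : ℝ) < (1 - ε) * e / N with hB
  have hd : (0:ℝ) ≤ (1 - ε) * e / N := by
    apply div_nonneg (mul_nonneg (by linarith) he0) hN0.le
  have h1 : ∑ v ∈ A \ B, ((1 - ε) * e / (N:ℝ))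
      ≤ ∑ v ∈ A, (((X.filter fun x => E x v).card : ℝ)) := by
    refine le_trans (Finset.sum_le_sum ?_)
      (Finset.sum_le_sum_of_subset_of_nonneg Finset.sdiff_subset ?_)
    · intro v hv
      have hvA := Finset.mem_sdiff.mp hv
      by_contra h
      push_neg at h
      exact hvA.2 (Finset.mem_filter.mpr ⟨hAY hvA.1, h⟩)
    · intro i _ _; positivity
  rw [Finset.sum_const, nsmul_eq_mul] at h1
  have hcard : (A.card : ℝ) ≤ ((A \ B).card : ℝ) + (B.card : ℝ) := by
    exact_mod_cast Finset.card_le_card_sdiff_add_card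
  have hAB : (3/4 : ℝ) * A.card ≤ ((A \ B).card : ℝ) := by
    have := hdeg
    nlinarith
  refine le_trans ?_ h1
  rw [div_mul_eq_mul_div, mul_div_assoc', div_le_div_iff₀ (by positivity) hN0]
  have hAe : (0:ℝ) ≤ (A.card:ℝ) * e := by positivity
  have hstep : (9/16) * ((A.card:ℝ) * e) ≤ ((A \ B).card : ℝ) * ((1 - ε) * e) := by
    nlinarith [mul_le_mul_of_nonneg_right hAB (mul_nonneg (by linarith : (0:ℝ) ≤ 1 - ε) he0),
      mul_nonneg hAe (by linarith : (0:ℝ) ≤ 1/4 - ε)]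
  nlinarith [mul_le_mul_of_nonneg_right hstep hN0.le]
end
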